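/- Let μ be an antisymmetric function of one variable (μ(−s) = −μ(s)) and α a constant. Then the bracket on differentiable functions of one variable defined by {f,g}(x,y) = (f(x)g(y) − g(x)f(y))μ(x−y) + α(f(x)g'(y) + f(y)g'(x) − g(x)f'(y) − g(y)f'(x)) is bilinear, skew-symmetric, symmetric under exchange of x and y, and satisfies the Leibniz-type compatibility making it extend to a Poisson bracket on the symmetric algebra; in particular the trilinear Jacobi expression Σ_cyc {f,{g,h}} vanishes (where the extension of the bracket to symmetric functions of two variables is by derivation in each argument, evaluated via the symmetrization rules of the functional construction). -/

import Mathlib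

set_option maxRecDepth 8000


/-- The bracket of the functional construction on functions of one variable:
`{f,g}(x,y) = (f(x)g(y) − g(x)f(y))μ(x−y) + α(f(x)g'(y) + f(y)g'(x) − g(x)f'(y) − g(y)f'(x))`. -/
noncomputable def br1 (μ : ℂ → ℂ) (α : ℂ) (f g : ℂ → ℂ) : ℂ → ℂ → ℂ :=
  fun x y => (f x * g y - g x * f y) * μ (x - y) +
    α * (f x * deriv g y + f y * deriv g x - g x * deriv f y - g y * deriv f x)

/-- The extension of the bracket of the functional construction to a bracket between a
function of one variable and a symmetric function of two variables (the first-order term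
of `f ⋆ G − G ⋆ f` in the functional construction with shift), as needed to evaluate the
Jacobi expression on the symmetric algebra. -/
noncomputable def br12 (μ : ℂ → ℂ) (α : ℂ) (f : ℂ → ℂ) (G : ℂ → ℂ → ℂ) : ℂ → ℂ → ℂ → ℂ :=
  fun x y z =>
    (f x * G y z * (μ (x - y) + μ (x - z)) +
      α * (f x * (deriv (fun t => G t z) y + deriv (fun t => G y t) z)
        - 2 * deriv f x * G y z)) +
    (f y * G z x * (μ (y - z) + μ (y - x)) +
      α * (f y * (deriv (fun t => G t x) z + deriv (fun t => G z t) x)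
        - 2 * deriv f y * G z x)) +
    (f z * G x y * (μ (z - x) + μ (z - y)) +
      α * (f z * (deriv (fun t => G t y) x + deriv (fun t => G x t) y)
        - 2 * deriv f z * G x y))

/-- Derivative of `br1 μ α f g` in the first variable. -/
lemma br1_deriv_fst (μ : ℂ → ℂ) (α : ℂ) (f g : ℂ → ℂ)
    (hμ : ContDiff ℂ ⊤ μ) (hf : ContDiff ℂ ⊤ f) (hg : ContDiff ℂ ⊤ g) (x y : ℂ) :
    deriv (fun t => br1 μ α f g t y) x =
      (deriv f x * g y - deriv g x * f y) * μ (x - y) +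
        (f x * g y - g x * f y) * deriv μ (x - y) +
        α * (deriv f x * deriv g y + f y * deriv (deriv g) x
          - deriv g x * deriv f y - g y * deriv (deriv f) x) := by
  have hf1 : Differentiable ℂ f := hf.differentiable (by simp)
  have hg1 : Differentiable ℂ g := hg.differentiable (by simp)
  have hμ1 : Differentiable ℂ μ := hμ.differentiable (by simp)
  have hf' : ContDiff ℂ ((⊤:ℕ∞) : WithTop ℕ∞) f := hf.of_le le_top
  have hg' : ContDiff ℂ ((⊤:ℕ∞) : WithTop ℕ∞) g := hg.of_le le_top
  have hf2 : Differentiable ℂ (deriv f) :=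
    ((contDiff_infty_iff_deriv.mp hf').2).differentiable (by simp)
  have hg2 : Differentiable ℂ (deriv g) :=
    ((contDiff_infty_iff_deriv.mp hg').2).differentiable (by simp)
  have hμsub : HasDerivAt (fun t : ℂ => μ (t - y)) (deriv μ (x - y)) x := by
    have := ((hμ1 (x - y)).hasDerivAt).comp x ((hasDerivAt_id x).sub_const y)
    simpa [Function.comp_def] using this
  have h1 : HasDerivAt (fun t => f t * g y - g t * f y)
      (deriv f x * g y - deriv g x * f y) x :=
    ((hf1 x).hasDerivAt.mul_const (g y)).sub ((hg1 x).hasDerivAt.mul_const (f y))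
  have h2 : HasDerivAt (fun t => (f t * g y - g t * f y) * μ (t - y))
      ((deriv f x * g y - deriv g x * f y) * μ (x - y) +
        (f x * g y - g x * f y) * deriv μ (x - y)) x := h1.mul hμsub
  have h3 : HasDerivAt
      (fun t => f t * deriv g y + f y * deriv g t - g t * deriv f y - g y * deriv f t)
      (deriv f x * deriv g y + f y * deriv (deriv g) x
        - deriv g x * deriv f y - g y * deriv (deriv f) x) x :=
    ((((hf1 x).hasDerivAt.mul_const (deriv g y)).add
      ((hg2 x).hasDerivAt.const_mul (f y))).sub
        ((hg1 x).hasDerivAt.mul_const (deriv f y))).sub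
          ((hf2 x).hasDerivAt.const_mul (g y))
  have := h2.add (h3.const_mul α)
  simpa [br1, Pi.add_def, mul_comm, mul_left_comm, mul_assoc] using this.deriv

/-- `br1` is symmetric in its two arguments when `μ` is odd. -/
lemma br1_symm (μ : ℂ → ℂ) (hμodd : ∀ s, μ (-s) = - μ s) (α : ℂ) (f g : ℂ → ℂ)
    (x y : ℂ) : br1 μ α f g x y = br1 μ α f g y x := by
  have : μ (y - x) = - μ (x - y) := by rw [show y - x = -(x - y) by ring, hμodd]
  simp only [br1, this]; ring

/-- Derivative of `br1 μ α f g` in the second variable. -/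
lemma br1_deriv_snd (μ : ℂ → ℂ) (hμodd : ∀ s, μ (-s) = - μ s) (α : ℂ) (f g : ℂ → ℂ)
    (hμ : ContDiff ℂ ⊤ μ) (hf : ContDiff ℂ ⊤ f) (hg : ContDiff ℂ ⊤ g) (x y : ℂ) :
    deriv (fun t => br1 μ α f g x t) y =
      (deriv f y * g x - deriv g y * f x) * μ (y - x) +
        (f y * g x - g y * f x) * deriv μ (y - x) +
        α * (deriv f y * deriv g x + f x * deriv (deriv g) y
          - deriv g y * deriv f x - g x * deriv (deriv f) y) := by
  have : (fun t => br1 μ α f g x t) = (fun t => br1 μ α f g t x) :=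
    funext fun t => (br1_symm μ hμodd α f g t x).symm
  rw [this, br1_deriv_fst μ α f g hμ hf hg]

theorem stmt_13 (μ : ℂ → ℂ) (hμodd : ∀ s, μ (-s) = - μ s) (α : ℂ)
    (hμ : ContDiff ℂ ⊤ μ) (f g h : ℂ → ℂ)
    (hf : ContDiff ℂ ⊤ f) (hg : ContDiff ℂ ⊤ g) (hh : ContDiff ℂ ⊤ h) :
    (∀ (a b : ℂ) (u v w : ℂ → ℂ), Differentiable ℂ u → Differentiable ℂ v →
      Differentiable ℂ w →
      (∀ x y, br1 μ α (fun t => a * u t + b * v t) w x y =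
        a * br1 μ α u w x y + b * br1 μ α v w x y) ∧
      (∀ x y, br1 μ α w (fun t => a * u t + b * v t) x y =
        a * br1 μ α w u x y + b * br1 μ α w v x y)) ∧
    (∀ x y, br1 μ α f g x y = - br1 μ α g f x y) ∧
    (∀ x y, br1 μ α f g x y = br1 μ α f g y x) ∧
    (∀ x y z,
      br12 μ α f (br1 μ α g h) x y z + br12 μ α g (br1 μ α h f) x y z +
        br12 μ α h (br1 μ α f g) x y z = 0) := by
  have hμ1 : Differentiable ℂ μ := hμ.differentiable (by simp)
  -- evenness of μ'
  have hμ'even : ∀ s : ℂ, deriv μ (-s) = deriv μ s := by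
    intro s
    have hcomp : HasDerivAt (fun t : ℂ => -μ (-t)) (deriv μ (-s)) s := by
      have h1 := ((hμ1 (-s)).hasDerivAt).comp s ((hasDerivAt_id s).neg)
      simpa [Function.comp_def, Pi.neg_def] using h1.neg
    have heq : (fun t : ℂ => -μ (-t)) = μ := by
      funext t; rw [hμodd]; ring
    rw [heq] at hcomp
    exact hcomp.deriv.symm
  refine ⟨?_, ?_, ?_, ?_⟩
  · intro a b u v w hu hv hw
    have hd : ∀ t, deriv (fun s => a * u s + b * v s) t = a * deriv u t + b * deriv v t := by
      intro t
      rw [deriv_fun_add ((hu t).const_mul a) ((hv t).const_mul b),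
        deriv_const_mul a (hu t), deriv_const_mul b (hv t)]
    constructor <;> intro x y <;> simp only [br1, hd] <;> ring
  · intro x y; simp only [br1]; ring
  · intro x y; exact br1_symm μ hμodd α f g x y
  · intro x y z
    -- rewrite second-slot derivatives via symmetry
    simp only [br12,
      br1_deriv_fst μ α g h hμ hg hh, br1_deriv_fst μ α h f hμ hh hf,
      br1_deriv_fst μ α f g hμ hf hg,
      br1_deriv_snd μ hμodd α g h hμ hg hh, br1_deriv_snd μ hμodd α h f hμ hh hf,
      br1_deriv_snd μ hμodd α f g hμ hf hg]
    have e1 : μ (y - x) = - μ (x - y) := by rw [show y - x = -(x - y) by ring, hμodd]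
    have e2 : μ (z - x) = - μ (x - z) := by rw [show z - x = -(x - z) by ring, hμodd]
    have e3 : μ (z - y) = - μ (y - z) := by rw [show z - y = -(y - z) by ring, hμodd]
    have d1 : deriv μ (y - x) = deriv μ (x - y) := by
      rw [show y - x = -(x - y) by ring, hμ'even]
    have d2 : deriv μ (z - x) = deriv μ (x - z) := by
      rw [show z - x = -(x - z) by ring, hμ'even]
    have d3 : deriv μ (z - y) = deriv μ (y - z) := by
      rw [show z - y = -(y - z) by ring, hμ'even]
    simp only [br1, e1, e2, e3, d1, d2, d3]
    ring
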